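/- Let p ≥ 5 be a prime. Then ∑_{r=1}^{p-1} (3r)!/(r!^3) * 27^{-r} * (1/r^2) ≡ -(9/2)*q_p(1/3)^2 (mod p), where q_p(1/3) = ((1/3)^{p-1} - 1)/p is the Fermat quotient of the p-adic unit 1/3. -/

import Mathlib

open Finset

namespace Stmt16

noncomputable section

section genField
variable {F : Type*} [Field F] [CharZero F]

lemma chooseF_succ_right (n k : ℕ) :
    (n.choose (k+1) : F) * ((k:F)+1) = (n.choose k : F) * ((n:F) - k) := by
  rcases lt_or_ge k n with h | h
  · have h0 := Nat.choose_succ_right_eq n k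
    have hcast : ((n.choose (k+1) * (k+1) : ℕ) : F) = ((n.choose k * (n - k) : ℕ) : F) := by
      rw [h0]
    push_cast [Nat.cast_sub h.le] at hcast
    linear_combination hcast
  · rcases eq_or_lt_of_le h with rfl | h2
    · simp [Nat.choose_succ_self]
    · have h1 : n.choose (k+1) = 0 := Nat.choose_eq_zero_of_lt (by omega)
      have h3 : n.choose k = 0 := Nat.choose_eq_zero_of_lt h2
      simp [h1, h3]

lemma chooseF_succ_both (n k : ℕ) :
    ((n+1).choose (k+1) : F) * ((k:F)+1) = (n.choose k : F) * ((n:F)+1) := by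
  have h0 := Nat.add_one_mul_choose_eq n k
  have hcast : (((n+1) * n.choose k : ℕ) : F) = (((n+1).choose (k+1) * (k+1) : ℕ) : F) := by
    exact_mod_cast congrArg (fun m : ℕ => (m : F)) h0
  push_cast at hcast
  linear_combination -hcast

lemma e_prodF (a k : ℕ) : (-1:F)^k * (a.choose k : F) * ((a+k).choose k : F)
    = ∏ j ∈ range k, (((j:F) - (a:F)) * ((a:F)+(j:F)+1) / ((j:F)+1)^2) := by
  induction k with
  | zero => simp
  | succ k ih =>
    rw [prod_range_succ, ← ih]
    have hk1 : ((k:F)+1) ≠ 0 := by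
      have h := (Nat.cast_ne_zero (R := F)).mpr (Nat.succ_ne_zero k)
      push_cast at h; exact h
    have h1 : (a.choose (k+1) : F) = (a.choose k : F) * ((a:F) - k) / ((k:F)+1) := by
      rw [eq_div_iff hk1]; exact chooseF_succ_right a k
    have h2 : ((a+k+1).choose (k+1) : F)
        = ((a+k).choose k : F) * ((a:F)+(k:F)+1) / ((k:F)+1) := by
      rw [eq_div_iff hk1]
      have := chooseF_succ_both (F := F) (a+k) k
      push_cast at this ⊢
      linear_combination this
    have e2 : a+(k+1) = a+k+1 := by omega
    rw [e2, h1, h2, pow_succ]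
    field_simp
    ring

lemma c_prodF (k : ℕ) : (((3*k).factorial : F)) / ((k.factorial:F))^3 / 27^k
    = ∏ j ∈ range k, ((3*(j:F)+1)*(3*(j:F)+2)/(9*((j:F)+1)^2)) := by
  induction k with
  | zero => simp
  | succ k ih =>
    rw [prod_range_succ, ← ih]
    have e1 : 3*(k+1) = (3*k+1)+1+1 := by omega
    rw [e1, Nat.factorial_succ, Nat.factorial_succ, Nat.factorial_succ, Nat.factorial_succ]
    have h1 : ((k.factorial:F)) ≠ 0 := Nat.cast_ne_zero.mpr k.factorial_ne_zero
    have h2 : ((27:F))^k ≠ 0 := by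
      apply pow_ne_zero
      exact_mod_cast (Nat.cast_ne_zero (R := F)).mpr (by norm_num : (27:ℕ) ≠ 0)
    have hk1 : ((k:F)+1) ≠ 0 := by
      have h := (Nat.cast_ne_zero (R := F)).mpr (Nat.succ_ne_zero k)
      push_cast at h; exact h
    push_cast
    field_simp
    ring

end genField

lemma sum_Icc_split {M : Type*} [AddCommMonoid M] (f : ℕ → M) (t n : ℕ) (h2 : t ≤ n) :
    (∑ i ∈ Icc 1 t, f i) + ∑ i ∈ Icc (t+1) n, f i = ∑ i ∈ Icc 1 n, f i := by
  rw [show Icc 1 t = Ioc 0 t from (Finset.Icc_add_one_left_eq_Ioc 0 t),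
      show Icc (t+1) n = Ioc t n from (Finset.Icc_add_one_left_eq_Ioc t n),
      show Icc 1 n = Ioc 0 n from (Finset.Icc_add_one_left_eq_Ioc 0 n)]
  exact Finset.sum_Ioc_consecutive f (by omega) h2

lemma sum_Icc_one_eq_range {M : Type*} [AddCommMonoid M] (f : ℕ → M) (n : ℕ) :
    ∑ i ∈ Icc 1 n, f i = ∑ i ∈ range n, f (i+1) := by
  rw [← Finset.Ico_add_one_right_eq_Icc, Finset.sum_Ico_eq_sum_range]
  simp [add_comm]

lemma sum_Icc_ite {M : Type*} [AddCommMonoid M] (f : ℕ → M) (t n : ℕ) :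
    ∑ i ∈ Icc 1 n, (if t < i then f i else 0) = ∑ i ∈ Icc (t+1) n, f i := by
  rw [← Finset.sum_filter]
  congr 1
  ext x
  simp only [mem_filter, mem_Icc]
  omega



variable {p : ℕ} [hp : Fact p.Prime]

lemma norm_int_unit {z : ℤ} (h : ¬ (p:ℤ) ∣ z) : ‖(z : ℚ_[p])‖ = 1 := by
  rcases lt_or_eq_of_le (Padic.norm_int_le_one (p:=p) z) with h2 | h2
  · exact absurd ((Padic.norm_intCast_lt_one_iff (k := z)).1 h2) h
  · exact h2

lemma pinv_le_one : ((p:ℝ))⁻¹ ≤ 1 := by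
  have : (1:ℝ) ≤ p := by exact_mod_cast hp.out.one_lt.le
  rw [inv_le_one_iff₀]; right; exact this

lemma pinv_pos : (0:ℝ) < (p:ℝ)⁻¹ := by
  have : (0:ℝ) < p := by exact_mod_cast hp.out.pos
  positivity

lemma norm_int_le_pinv {z : ℤ} (h : (p:ℤ) ∣ z) : ‖(z : ℚ_[p])‖ ≤ (p:ℝ)⁻¹ := by
  obtain ⟨w, rfl⟩ := h
  push_cast
  rw [norm_mul, Padic.norm_p]
  calc (↑p)⁻¹ * ‖(w : ℚ_[p])‖ ≤ (p:ℝ)⁻¹ * 1 :=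
        mul_le_mul_of_nonneg_left (Padic.norm_int_le_one w) pinv_pos.le
    _ = (p:ℝ)⁻¹ := mul_one _

/-- x ≡ y mod p -/
def Cong (x y : ℚ_[p]) : Prop := ‖x - y‖ ≤ (p:ℝ)⁻¹

lemma cong_refl (x : ℚ_[p]) : Cong x x := by simp [Cong]

lemma Cong.symm {x y : ℚ_[p]} (h : Cong x y) : Cong y x := by
  rwa [Cong, norm_sub_rev]

lemma Cong.trans {x y z : ℚ_[p]} (h1 : Cong x y) (h2 : Cong y z) : Cong x z := by
  have := Padic.nonarchimedean (x - y) (y - z)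
  simp only [sub_add_sub_cancel] at this
  exact this.trans (max_le h1 h2)

lemma Cong.add {x y z w : ℚ_[p]} (h1 : Cong x y) (h2 : Cong z w) : Cong (x+z) (y+w) := by
  have := Padic.nonarchimedean (x - y) (z - w)
  have e : x + z - (y + w) = (x - y) + (z - w) := by ring
  rw [Cong, e]
  exact this.trans (max_le h1 h2)

lemma Cong.neg {x y : ℚ_[p]} (h : Cong x y) : Cong (-x) (-y) := by
  have e : -x - -y = -(x - y) := by ring
  rw [Cong, e, norm_neg]; exact h

lemma Cong.sub {x y z w : ℚ_[p]} (h1 : Cong x y) (h2 : Cong z w) : Cong (x-z) (y-w) := by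
  have := h1.add h2.neg
  simpa [sub_eq_add_neg] using this

lemma Cong.mul {x y z w : ℚ_[p]} (h1 : Cong x y) (h2 : Cong z w)
    (hx : ‖x‖ ≤ 1) (hw : ‖w‖ ≤ 1) : Cong (x*z) (y*w) := by
  have e : x*z - y*w = x*(z-w) + (x-y)*w := by ring
  rw [Cong, e]
  refine (Padic.nonarchimedean _ _).trans (max_le ?_ ?_)
  · rw [norm_mul]
    calc ‖x‖ * ‖z - w‖ ≤ 1 * (p:ℝ)⁻¹ := by
          exact mul_le_mul hx h2 (norm_nonneg _) zero_le_one
      _ = (p:ℝ)⁻¹ := one_mul _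
  · rw [norm_mul]
    calc ‖x - y‖ * ‖w‖ ≤ (p:ℝ)⁻¹ * 1 := by
          exact mul_le_mul h1 hw (norm_nonneg _) pinv_pos.le
      _ = (p:ℝ)⁻¹ := mul_one _

lemma Cong.inv {x y : ℚ_[p]} (hx : ‖x‖ = 1) (hy : ‖y‖ = 1) (h : Cong x y) :
    Cong x⁻¹ y⁻¹ := by
  have hx0 : x ≠ 0 := by intro h0; rw [h0, norm_zero] at hx; norm_num at hx
  have hy0 : y ≠ 0 := by intro h0; rw [h0, norm_zero] at hy; norm_num at hy
  have e : x⁻¹ - y⁻¹ = (y - x) * x⁻¹ * y⁻¹ := by field_simp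
  rw [Cong, e, norm_mul, norm_mul, norm_inv, norm_inv, hx, hy]
  rw [inv_one, mul_one, mul_one, norm_sub_rev]; exact h

lemma norm_sum_le_of {ι : Type*} {s : Finset ι} {f : ι → ℚ_[p]} {c : ℝ} (hc : 0 ≤ c)
    (h : ∀ i ∈ s, ‖f i‖ ≤ c) : ‖∑ i ∈ s, f i‖ ≤ c := by
  classical
  induction s using Finset.induction with
  | empty => simpa using hc
  | @insert a s' hnot ih =>
    rw [Finset.sum_insert hnot]
    refine (Padic.nonarchimedean _ _).trans (max_le ?_ ?_)
    · exact h a (Finset.mem_insert_self a s')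
    · exact ih fun i hi => h i (Finset.mem_insert_of_mem hi)

lemma cong_sum {ι : Type*} {s : Finset ι} {f g : ι → ℚ_[p]}
    (h : ∀ i ∈ s, Cong (f i) (g i)) : Cong (∑ i ∈ s, f i) (∑ i ∈ s, g i) := by
  rw [Cong, ← Finset.sum_sub_distrib]
  exact norm_sum_le_of pinv_pos.le fun i hi => h i hi

lemma norm_prod_le_one {ι : Type*} {s : Finset ι} {f : ι → ℚ_[p]}
    (h : ∀ i ∈ s, ‖f i‖ ≤ 1) : ‖∏ i ∈ s, f i‖ ≤ 1 := by
  classical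
  induction s using Finset.induction with
  | empty => simp
  | @insert a s' hnot ih =>
    rw [Finset.prod_insert hnot, norm_mul]
    exact mul_le_one₀ (h a (Finset.mem_insert_self a s'))
      (norm_nonneg _) (ih fun i hi => h i (Finset.mem_insert_of_mem hi))

lemma cong_prod {ι : Type*} {s : Finset ι} {f g : ι → ℚ_[p]}
    (hf : ∀ i ∈ s, ‖f i‖ ≤ 1) (hg : ∀ i ∈ s, ‖g i‖ ≤ 1)
    (h : ∀ i ∈ s, Cong (f i) (g i)) : Cong (∏ i ∈ s, f i) (∏ i ∈ s, g i) := by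
  classical
  induction s using Finset.induction with
  | empty => simpa using cong_refl (p:=p) 1
  | @insert a s' hnot ih =>
    rw [Finset.prod_insert hnot, Finset.prod_insert hnot]
    exact Cong.mul (h a (Finset.mem_insert_self a s'))
      (ih (fun i hi => hf i (Finset.mem_insert_of_mem hi))
          (fun i hi => hg i (Finset.mem_insert_of_mem hi))
          (fun i hi => h i (Finset.mem_insert_of_mem hi)))
      (hf a (Finset.mem_insert_self a s'))
      (norm_prod_le_one fun i hi => hg i (Finset.mem_insert_of_mem hi))

/-- key: product of (1 + x_i) with ‖x_i‖ ≤ 1/p is within 1/p² of 1 + Σ x_i -/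
lemma prod_one_add {ι : Type*} {s : Finset ι} {x : ι → ℚ_[p]}
    (h : ∀ i ∈ s, ‖x i‖ ≤ (p:ℝ)⁻¹) :
    ‖∏ i ∈ s, (1 + x i) - (1 + ∑ i ∈ s, x i)‖ ≤ (p:ℝ)⁻¹ * (p:ℝ)⁻¹ := by
  classical
  induction s using Finset.induction with
  | empty => simp; positivity
  | @insert a s' hnot ih =>
    rw [Finset.prod_insert hnot, Finset.sum_insert hnot]
    have hδ := ih fun i hi => h i (Finset.mem_insert_of_mem hi)
    set δ := ∏ i ∈ s', (1 + x i) - (1 + ∑ i ∈ s', x i) with hδdef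
    have e : (1 + x a) * ∏ i ∈ s', (1 + x i) - (1 + (x a + ∑ i ∈ s', x i))
        = x a * (∑ i ∈ s', x i) + (1 + x a) * δ := by
      rw [hδdef]; ring
    rw [e]
    have ha : ‖x a‖ ≤ (p:ℝ)⁻¹ := h a (Finset.mem_insert_self a s')
    have hs : ‖∑ i ∈ s', x i‖ ≤ (p:ℝ)⁻¹ :=
      norm_sum_le_of pinv_pos.le fun i hi => h i (Finset.mem_insert_of_mem hi)
    refine (Padic.nonarchimedean _ _).trans (max_le ?_ ?_)
    · rw [norm_mul]
      exact mul_le_mul ha hs (norm_nonneg _) pinv_pos.le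
    · rw [norm_mul]
      have h1a : ‖1 + x a‖ ≤ 1 := by
        refine (Padic.nonarchimedean _ _).trans (max_le ?_ (ha.trans pinv_le_one))
        simp
      calc ‖1 + x a‖ * ‖δ‖ ≤ 1 * ((p:ℝ)⁻¹ * (p:ℝ)⁻¹) := by
            exact mul_le_mul h1a hδ (norm_nonneg _) zero_le_one
        _ = (p:ℝ)⁻¹ * (p:ℝ)⁻¹ := one_mul _


def bin (n k : ℕ) : ℚ := n.choose k
def H (n : ℕ) : ℚ := ∑ i ∈ range n, ((i:ℚ)+1)⁻¹
def fa (n k : ℕ) : ℚ := (-1)^k * bin n k * bin (n+k) k / k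
def fb (n k : ℕ) : ℚ := (-1)^k * bin n k * bin (n+k) k / k^2
def ga (n k : ℕ) : ℚ := -2 * (k:ℚ)^2 * (-1)^k * bin (n+1) k * bin (n+k) k / ((n:ℚ)+1)^3
def gb (n k : ℕ) : ℚ := ga n k / ((n:ℚ)+1)

lemma bin_succ_right (n k : ℕ) : bin n (k+1) * ((k:ℚ)+1) = bin n k * ((n:ℚ) - k) := by
  rcases lt_or_ge k n with h | h
  · have := Nat.choose_succ_right_eq n k
    have hcast : ((n.choose (k+1) * (k+1) : ℕ) : ℚ) = ((n.choose k * (n - k) : ℕ) : ℚ) := by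
      rw [this]
    push_cast [Nat.cast_sub h.le] at hcast
    simpa [bin] using hcast
  · rcases eq_or_lt_of_le h with rfl | h2
    · simp [bin, Nat.choose_succ_self]
    · have h1 : n.choose (k+1) = 0 := Nat.choose_eq_zero_of_lt (by omega)
      have h3 : n.choose k = 0 := Nat.choose_eq_zero_of_lt h2
      simp [bin, h1, h3]

lemma bin_succ_both (n k : ℕ) : bin (n+1) (k+1) * ((k:ℚ)+1) = bin n k * ((n:ℚ)+1) := by
  have := Nat.add_one_mul_choose_eq n k
  have hcast : (((n+1) * n.choose k : ℕ) : ℚ) = (((n+1).choose (k+1) * (k+1) : ℕ) : ℚ) := by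
    exact_mod_cast congrArg (fun m : ℕ => (m : ℚ)) this
  push_cast at hcast
  simp only [bin]
  linarith [hcast]

lemma bin_succ_left (n k : ℕ) : ((n:ℚ)+1-k) * bin (n+1) k = ((n:ℚ)+1) * bin n k := by
  have h1 := bin_succ_right (n+1) k
  have h2 := bin_succ_both n k
  have hk : ((k:ℚ)+1) ≠ 0 := by positivity
  have := h1.symm.trans h2
  push_cast at this
  -- bin (n+1) k * ((n+1) - k) = bin n k * (n+1)
  nlinarith [this]

lemma certA (n k : ℕ) (hk : 1 ≤ k) :
    fa (n+1) k - fa n k = ga n (k+1) - ga n k := by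
  have hn1 : ((n:ℚ)+1) ≠ 0 := by positivity
  have hk1 : ((k:ℚ)+1) ≠ 0 := by positivity
  have hk0 : (k:ℚ) ≠ 0 := Nat.cast_ne_zero.mpr (by omega)
  have e1 : n+1+k = n+k+1 := by omega
  have e2 : n+(k+1) = n+k+1 := by omega
  have h1 : bin (n+k+1) k = ((n:ℚ)+k+1) * bin (n+k) k / ((n:ℚ)+1) := by
    have := bin_succ_left (n+k) k
    push_cast at this
    rw [eq_div_iff hn1]
    push_cast
    nlinarith [this]
  have h2 : bin (n+1) (k+1) = ((n:ℚ)+1-k) * bin (n+1) k / ((k:ℚ)+1) := by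
    have := bin_succ_right (n+1) k
    push_cast at this
    rw [eq_div_iff hk1]
    nlinarith [this]
  have h3 : bin (n+k+1) (k+1) = ((n:ℚ)+k+1) * bin (n+k) k / ((k:ℚ)+1) := by
    have := bin_succ_both (n+k) k
    push_cast at this
    rw [eq_div_iff hk1]
    nlinarith [this]
  have h4 : bin n k = ((n:ℚ)+1-k) * bin (n+1) k / ((n:ℚ)+1) := by
    have := bin_succ_left n k
    rw [eq_div_iff hn1]
    nlinarith [this]
  rw [fa, fa, ga, ga, e1, e2, h1, h2, h3, h4]
  push_cast
  field_simp
  ring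

lemma certB (n k : ℕ) (hk : 1 ≤ k) :
    fb (n+1) k - fb n k - 2/((n:ℚ)+1) * fa n k = gb n (k+1) - gb n k := by
  have hn1 : ((n:ℚ)+1) ≠ 0 := by positivity
  have hk1 : ((k:ℚ)+1) ≠ 0 := by positivity
  have hk0 : (k:ℚ) ≠ 0 := Nat.cast_ne_zero.mpr (by omega)
  have e1 : n+1+k = n+k+1 := by omega
  have e2 : n+(k+1) = n+k+1 := by omega
  have h1 : bin (n+k+1) k = ((n:ℚ)+k+1) * bin (n+k) k / ((n:ℚ)+1) := by
    have := bin_succ_left (n+k) k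
    push_cast at this
    rw [eq_div_iff hn1]
    push_cast
    nlinarith [this]
  have h2 : bin (n+1) (k+1) = ((n:ℚ)+1-k) * bin (n+1) k / ((k:ℚ)+1) := by
    have := bin_succ_right (n+1) k
    push_cast at this
    rw [eq_div_iff hk1]
    nlinarith [this]
  have h3 : bin (n+k+1) (k+1) = ((n:ℚ)+k+1) * bin (n+k) k / ((k:ℚ)+1) := by
    have := bin_succ_both (n+k) k
    push_cast at this
    rw [eq_div_iff hk1]
    nlinarith [this]
  have h4 : bin n k = ((n:ℚ)+1-k) * bin (n+1) k / ((n:ℚ)+1) := by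
    have := bin_succ_left n k
    rw [eq_div_iff hn1]
    nlinarith [this]
  rw [fb, fb, fa, gb, gb, ga, ga, e1, e2, h1, h2, h3, h4]
  push_cast
  field_simp
  ring

lemma ga_one (n : ℕ) : ga n 1 = 2 / ((n:ℚ)+1) := by
  have hn1 : ((n:ℚ)+1) ≠ 0 := by positivity
  simp only [ga, bin, Nat.choose_one_right]
  push_cast
  field_simp

lemma ga_top (n : ℕ) : ga n (n+2) = 0 := by
  have : (n+1).choose (n+2) = 0 := Nat.choose_eq_zero_of_lt (by omega)
  simp [ga, bin, this]

lemma fa_top (n : ℕ) : fa n (n+1) = 0 := by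
  have : n.choose (n+1) = 0 := Nat.choose_eq_zero_of_lt (by omega)
  simp [fa, bin, this]

lemma fb_top (n : ℕ) : fb n (n+1) = 0 := by
  have : n.choose (n+1) = 0 := Nat.choose_eq_zero_of_lt (by omega)
  simp [fb, bin, this]

lemma sumA (n : ℕ) : ∑ i ∈ range n, fa n (i+1) = -2 * H n := by
  induction n with
  | zero => simp [H]
  | succ n ih =>
    have step : ∑ i ∈ range (n+1), fa (n+1) (i+1)
        = ∑ i ∈ range (n+1), fa n (i+1) + ∑ i ∈ range (n+1), (ga n (i+1+1) - ga n (i+1)) := by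
      rw [← Finset.sum_add_distrib]
      refine Finset.sum_congr rfl fun i _ => ?_
      have := certA n (i+1) (by omega)
      linarith [this]
    have tel : ∑ i ∈ range (n+1), (ga n (i+1+1) - ga n (i+1)) = ga n (n+2) - ga n 1 := by
      have := Finset.sum_range_sub (fun i => ga n (i+1)) (n+1)
      simpa using this
    rw [step, tel, Finset.sum_range_succ, ih, fa_top, ga_top, ga_one]
    have hn1 : ((n:ℚ)+1) ≠ 0 := by positivity
    have hH : H (n+1) = H n + ((n:ℚ)+1)⁻¹ := by
      rw [H, H, Finset.sum_range_succ]
    rw [hH]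
    field_simp
    try ring

lemma sumB (n : ℕ) : ∑ i ∈ range n, fb n (i+1) = -2 * (H n)^2 := by
  induction n with
  | zero => simp [H]
  | succ n ih =>
    have hn1 : ((n:ℚ)+1) ≠ 0 := by positivity
    have step : ∑ i ∈ range (n+1), fb (n+1) (i+1)
        = ∑ i ∈ range (n+1), (fb n (i+1) + 2/((n:ℚ)+1) * fa n (i+1))
          + ∑ i ∈ range (n+1), (gb n (i+1+1) - gb n (i+1)) := by
      rw [← Finset.sum_add_distrib]
      refine Finset.sum_congr rfl fun i _ => ?_
      have := certB n (i+1) (by omega)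
      linarith [this]
    have tel : ∑ i ∈ range (n+1), (gb n (i+1+1) - gb n (i+1)) = gb n (n+2) - gb n 1 := by
      have := Finset.sum_range_sub (fun i => gb n (i+1)) (n+1)
      simpa using this
    rw [step, tel, Finset.sum_add_distrib, ← Finset.mul_sum, Finset.sum_range_succ,
      Finset.sum_range_succ (fun i => fa n (i+1)), ih, sumA, fa_top, fb_top]
    rw [gb, gb, ga_top, ga_one]
    have hH : H (n+1) = H n + ((n:ℚ)+1)⁻¹ := by
      rw [H, H, Finset.sum_range_succ]
    rw [hH]
    field_simp
    try ring

lemma norm_nat_unit (hp5 : 5 ≤ p) {k : ℕ} (h1 : 1 ≤ k) (h2 : k ≤ p-1) : ‖(k:ℚ_[p])‖ = 1 := by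
  have : ¬ (p:ℤ) ∣ (k:ℤ) := by
    rw [Int.natCast_dvd_natCast]
    intro hd
    have := Nat.le_of_dvd (by omega) hd
    omega
  have := norm_int_unit this
  simpa using this

lemma norm_three_unit (hp5 : 5 ≤ p) : ‖(3:ℚ_[p])‖ = 1 := by
  have h3 : ¬ (p:ℤ) ∣ 3 := by
    intro hd
    have h := Int.le_of_dvd (by norm_num) hd
    have hh : p ≤ 3 := by exact_mod_cast h
    omega
  have := norm_int_unit h3
  simpa using this

section withA
variable (hp5 : 5 ≤ p) (a : ℕ) (ha3 : p ∣ 3*a+1)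

include hp5 ha3 in
lemma factor_cong {j : ℕ} (hj : j+1 ≤ p-1) :
    Cong ((3*(j:ℚ_[p])+1)*(3*(j:ℚ_[p])+2)/(9*((j:ℚ_[p])+1)^2))
         (((j:ℚ_[p]) - (a:ℚ_[p])) * ((a:ℚ_[p])+(j:ℚ_[p])+1) / ((j:ℚ_[p])+1)^2) := by
  have hj1 : ‖((j:ℚ_[p])+1)‖ = 1 := by
    have := norm_nat_unit hp5 (k := j+1) (by omega) hj
    push_cast at this; exact this
  have h3 : ‖(3:ℚ_[p])‖ = 1 := norm_three_unit hp5
  have hden : ‖(9*((j:ℚ_[p])+1)^2)‖ = 1 := by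
    rw [show (9:ℚ_[p]) = 3*3 by norm_num, norm_mul, norm_mul, norm_pow, hj1, h3]; norm_num
  rw [Cong]
  have hne : (9*((j:ℚ_[p])+1)^2) ≠ 0 := by
    intro h0; rw [h0, norm_zero] at hden; norm_num at hden
  have hne2 : ((j:ℚ_[p])+1)^2 ≠ 0 := by
    intro h0; apply hne; rw [h0, mul_zero]
  have key : (3*(j:ℚ_[p])+1)*(3*(j:ℚ_[p])+2)/(9*((j:ℚ_[p])+1)^2)
      - ((j:ℚ_[p]) - (a:ℚ_[p])) * ((a:ℚ_[p])+(j:ℚ_[p])+1) / ((j:ℚ_[p])+1)^2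
      = (((3*a+1 : ℕ) : ℚ_[p]) * (1 + ((3*a+1 : ℕ) : ℚ_[p]))) / (9*((j:ℚ_[p])+1)^2) := by
    field_simp
    push_cast
    ring
  rw [key, norm_div, hden, div_one]
  have hu : (p:ℤ) ∣ ((3*a+1 : ℕ) : ℤ) * (1 + ((3*a+1:ℕ):ℤ)) :=
    Dvd.dvd.mul_right (by exact_mod_cast Int.natCast_dvd_natCast.mpr ha3) _
  have := norm_int_le_pinv hu
  push_cast at this ⊢
  exact this

include hp5 in
lemma factor_norm_c {j : ℕ} (hj : j+1 ≤ p-1) :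
    ‖(3*(j:ℚ_[p])+1)*(3*(j:ℚ_[p])+2)/(9*((j:ℚ_[p])+1)^2)‖ ≤ 1 := by
  have hj1 : ‖((j:ℚ_[p])+1)‖ = 1 := by
    have := norm_nat_unit hp5 (k := j+1) (by omega) hj
    push_cast at this; exact this
  have h3 : ‖(3:ℚ_[p])‖ = 1 := norm_three_unit hp5
  have hden : ‖(9*((j:ℚ_[p])+1)^2)‖ = 1 := by
    rw [show (9:ℚ_[p]) = 3*3 by norm_num, norm_mul, norm_mul, norm_pow, hj1, h3]; norm_num
  rw [norm_div, hden, div_one]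
  have e : (3*(j:ℚ_[p])+1)*(3*(j:ℚ_[p])+2) = ((((3*j+1)*(3*j+2) : ℕ) : ℤ) : ℚ_[p]) := by
    push_cast; ring
  rw [e]
  exact Padic.norm_int_le_one _

include hp5 in
lemma factor_norm_e {j : ℕ} (hj : j+1 ≤ p-1) :
    ‖((j:ℚ_[p]) - (a:ℚ_[p])) * ((a:ℚ_[p])+(j:ℚ_[p])+1) / ((j:ℚ_[p])+1)^2‖ ≤ 1 := by
  have hj1 : ‖((j:ℚ_[p])+1)‖ = 1 := by
    have := norm_nat_unit hp5 (k := j+1) (by omega) hj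
    push_cast at this; exact this
  have hden : ‖((j:ℚ_[p])+1)^2‖ = 1 := by rw [norm_pow, hj1]; norm_num
  rw [norm_div, hden, div_one]
  have e : ((j:ℚ_[p]) - (a:ℚ_[p])) * ((a:ℚ_[p])+(j:ℚ_[p])+1)
      = ((((j:ℤ) - (a:ℤ)) * ((a:ℤ)+(j:ℤ)+1) : ℤ) : ℚ_[p]) := by
    push_cast; ring
  rw [e]
  exact Padic.norm_int_le_one _

include hp5 ha3 in
lemma term_cong {k : ℕ} (hk : 1 ≤ k) (hk2 : k ≤ p-1) :
    Cong (((3*k).factorial : ℚ_[p]) / ((k.factorial:ℚ_[p]))^3 / 27^k)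
         ((-1:ℚ_[p])^k * (a.choose k : ℚ_[p]) * ((a+k).choose k : ℚ_[p])) := by
  rw [c_prodF, e_prodF]
  refine cong_prod ?_ ?_ ?_
  · intro j hj
    exact factor_norm_c hp5 (by simp at hj; omega)
  · intro j hj
    exact factor_norm_e hp5 a (by simp at hj; omega)
  · intro j hj
    exact factor_cong hp5 a ha3 (by simp at hj; omega)

include hp5 in
omit ha3 in
lemma term_norm_c {k : ℕ} (hk2 : k ≤ p-1) :
    ‖((3*k).factorial : ℚ_[p]) / ((k.factorial:ℚ_[p]))^3 / 27^k‖ ≤ 1 := by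
  rw [c_prodF]
  exact norm_prod_le_one fun j hj => factor_norm_c hp5 (by simp at hj; omega)

end withA
def Hp (p : ℕ) [Fact p.Prime] (n : ℕ) : ℚ_[p] := ∑ k ∈ Icc 1 n, ((k:ℚ_[p]))⁻¹
def q3 (p : ℕ) [Fact p.Prime] : ℚ_[p] := ((3:ℚ_[p])^(p-1) - 1)/(p:ℚ_[p])

section q3sec
variable (hp5 : 5 ≤ p)

include hp5 in
lemma norm_Hp_le_one {n : ℕ} (hn : n ≤ p-1) : ‖Hp p n‖ ≤ 1 := by
  refine norm_sum_le_of zero_le_one fun k hk => ?_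
  simp only [mem_Icc] at hk
  rw [norm_inv, norm_nat_unit hp5 hk.1 (hk.2.trans hn)]
  norm_num

include hp5 in
lemma not_dvd_unit {k : ℕ} (h1 : 1 ≤ k) (h2 : k ≤ p-1) : ¬ p ∣ k := by
  intro hd
  have := Nat.le_of_dvd (by omega) hd
  omega

include hp5 in
lemma prod_perm3 :
    ∏ k ∈ Icc 1 (p-1), (((3*k % p : ℕ)) : ℚ_[p]) = ∏ k ∈ Icc 1 (p-1), ((k : ℕ) : ℚ_[p]) := by
  have h3ne : (3 : ZMod p) ≠ 0 := by
    have : ((3:ℕ) : ZMod p) ≠ 0 := by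
      rw [Ne, ZMod.natCast_eq_zero_iff]
      intro hd
      have := Nat.le_of_dvd (by norm_num) hd
      omega
    simpa using this
  set t := ((3 : ZMod p)⁻¹).val with ht
  have htlt : t < p := ZMod.val_lt _
  have ht3 : (t*3) % p = 1 % p := by
    have hcast : ((t*3 : ℕ) : ZMod p) = ((1:ℕ) : ZMod p) := by
      push_cast
      rw [ht, ZMod.natCast_rightInverse _]
      exact inv_mul_cancel₀ h3ne
    exact (ZMod.natCast_eq_natCast_iff _ _ _).mp hcast
  have htne : t ≠ 0 := by
    intro h0
    exact inv_ne_zero h3ne (by rwa [← ZMod.val_eq_zero, ← ht])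
  have hp1 : 1 ≤ p - 1 := by omega
  refine Finset.prod_nbij' (fun k => 3*k % p) (fun k => t*k % p) ?_ ?_ ?_ ?_ ?_
  · intro k hk
    simp only [mem_Icc] at hk ⊢
    constructor
    · rcases Nat.eq_zero_or_pos (3*k % p) with h0 | h0
      · exfalso
        have hd : p ∣ 3*k := Nat.dvd_of_mod_eq_zero h0
        rcases (Nat.Prime.dvd_mul hp.out).mp hd with h | h
        · have := Nat.le_of_dvd (by norm_num) h; omega
        · exact not_dvd_unit hp5 hk.1 hk.2 h
      · omega
    · have := Nat.mod_lt (3*k) (show 0 < p by omega)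
      omega
  · intro k hk
    simp only [mem_Icc] at hk ⊢
    constructor
    · rcases Nat.eq_zero_or_pos (t*k % p) with h0 | h0
      · exfalso
        have hd : p ∣ t*k := Nat.dvd_of_mod_eq_zero h0
        rcases (Nat.Prime.dvd_mul hp.out).mp hd with h | h
        · have := Nat.le_of_dvd (by omega) h; omega
        · exact not_dvd_unit hp5 hk.1 hk.2 h
      · omega
    · have := Nat.mod_lt (t*k) (show 0 < p by omega)
      omega
  · intro k hk
    simp only [mem_Icc] at hk
    have : t * (3*k % p) ≡ 1 * k [MOD p] := by
      calc t * (3*k % p) ≡ t * (3*k) [MOD p] := (Nat.mod_modEq (3*k) p).mul_left t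
        _ = (t*3) * k := by ring
        _ ≡ 1 * k [MOD p] := Nat.ModEq.mul_right k ht3
    have hk2 : k < p := by omega
    calc t * (3*k % p) % p = (1*k) % p := this
      _ = k := by rw [one_mul]; exact Nat.mod_eq_of_lt hk2
  · intro k hk
    simp only [mem_Icc] at hk
    have : 3 * (t*k % p) ≡ 1 * k [MOD p] := by
      calc 3 * (t*k % p) ≡ 3 * (t*k) [MOD p] := (Nat.mod_modEq (t*k) p).mul_left 3
        _ = (t*3) * k := by ring
        _ ≡ 1 * k [MOD p] := Nat.ModEq.mul_right k ht3
    have hk2 : k < p := by omega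
    calc 3 * (t*k % p) % p = (1*k) % p := this
      _ = k := by rw [one_mul]; exact Nat.mod_eq_of_lt hk2
  · intro k hk
    rfl

include hp5 in
lemma pow3_prod :
    (3:ℚ_[p])^(p-1) = ∏ k ∈ Icc 1 (p-1), (1 + (p:ℚ_[p]) * ((3*k/p : ℕ) : ℚ_[p]) / ((3*k % p : ℕ) : ℚ_[p])) := by
  have hterm : ∀ k ∈ Icc 1 (p-1),
      (1 + (p:ℚ_[p]) * ((3*k/p : ℕ) : ℚ_[p]) / ((3*k % p : ℕ) : ℚ_[p]))
      = ((3*k : ℕ) : ℚ_[p]) / ((3*k % p : ℕ) : ℚ_[p]) := by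
    intro k hk
    simp only [mem_Icc] at hk
    have hrne : ((3*k % p : ℕ) : ℚ_[p]) ≠ 0 := by
      have h1 : 1 ≤ 3*k % p := by
        rcases Nat.eq_zero_or_pos (3*k % p) with h0 | h0
        · exfalso
          have hd : p ∣ 3*k := Nat.dvd_of_mod_eq_zero h0
          rcases (Nat.Prime.dvd_mul hp.out).mp hd with h | h
          · have := Nat.le_of_dvd (by norm_num) h; omega
          · exact not_dvd_unit hp5 hk.1 hk.2 h
        · omega
      have := norm_nat_unit hp5 h1 (by have := Nat.mod_lt (3*k) (show 0 < p by omega); omega)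
      intro h0; rw [h0, norm_zero] at this; norm_num at this
    have hmd := congrArg (fun m : ℕ => (m : ℚ_[p])) (Nat.mod_add_div (3*k) p)
    push_cast at hmd
    rw [eq_div_iff hrne]
    field_simp
    push_cast
    linear_combination hmd
  rw [Finset.prod_congr rfl hterm, Finset.prod_div_distrib, prod_perm3 hp5]
  have h3k : ∀ k ∈ Icc 1 (p-1), ((3*k : ℕ) : ℚ_[p]) = 3 * (k : ℚ_[p]) := by
    intro k _; push_cast; ring
  rw [Finset.prod_congr rfl h3k, Finset.prod_mul_distrib, Finset.prod_const, Nat.card_Icc]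
  have hne : (∏ k ∈ Icc 1 (p-1), ((k:ℕ) : ℚ_[p])) ≠ 0 := by
    rw [Finset.prod_ne_zero_iff]
    intro k hk
    simp only [mem_Icc] at hk
    have := norm_nat_unit hp5 hk.1 hk.2
    intro h0; rw [h0, norm_zero] at this; norm_num at this
  rw [mul_div_assoc, div_self hne, mul_one]
  congr 1

include hp5 in
lemma three_zmod_ne : (3 : ZMod p) ≠ 0 := by
  have h : ((3:ℕ) : ZMod p) ≠ 0 := by
    rw [Ne, ZMod.natCast_eq_zero_iff]
    intro hd
    have := Nat.le_of_dvd (by norm_num) hd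
    omega
  simpa using h

include hp5 in
lemma norm_q3_le_one : ‖(q3 p)‖ ≤ 1 := by
  have hferm : ((3:ZMod p))^(p-1) = 1 := ZMod.pow_card_sub_one_eq_one (three_zmod_ne hp5)
  have hdvd : (p:ℤ) ∣ 3^(p-1) - 1 := by
    rw [← ZMod.intCast_zmod_eq_zero_iff_dvd]
    push_cast
    rw [hferm]
    ring
  obtain ⟨m, hm⟩ := hdvd
  have hpne : (p:ℚ_[p]) ≠ 0 := Nat.cast_ne_zero.mpr (by omega)
  have hq : q3 p = (m : ℚ_[p]) := by
    rw [q3, div_eq_iff hpne]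
    have hc := congrArg (fun z : ℤ => (z : ℚ_[p])) hm
    push_cast at hc
    linear_combination hc
  rw [hq]
  exact Padic.norm_int_le_one m

include hp5 in
lemma q3_cong :
    Cong (q3 p) ((3:ℚ_[p])⁻¹ * ∑ k ∈ Icc 1 (p-1), ((3*k/p : ℕ) : ℚ_[p]) * ((k:ℚ_[p]))⁻¹) := by
  have hppos : (0:ℝ) < p := by have : 5 ≤ p := hp5; positivity
  have hpne : (p:ℚ_[p]) ≠ 0 := Nat.cast_ne_zero.mpr (by omega)
  -- basic facts about r_k
  have hr1 : ∀ k, 1 ≤ k → k ≤ p-1 → 1 ≤ 3*k % p ∧ 3*k % p ≤ p-1 := by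
    intro k h1 h2
    constructor
    · rcases Nat.eq_zero_or_pos (3*k % p) with h0 | h0
      · exfalso
        have hd : p ∣ 3*k := Nat.dvd_of_mod_eq_zero h0
        rcases (Nat.Prime.dvd_mul hp.out).mp hd with h | h
        · have := Nat.le_of_dvd (by norm_num) h; omega
        · exact not_dvd_unit hp5 h1 h2 h
      · omega
    · have := Nat.mod_lt (3*k) (show 0 < p by omega); omega
  have hrnorm : ∀ k ∈ Icc 1 (p-1), ‖((3*k % p : ℕ) : ℚ_[p])‖ = 1 := by
    intro k hk
    simp only [mem_Icc] at hk
    exact norm_nat_unit hp5 (hr1 k hk.1 hk.2).1 (hr1 k hk.1 hk.2).2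
  -- step 1 : congruence from the product expansion
  have hx : ∀ k ∈ Icc 1 (p-1),
      ‖(p:ℚ_[p]) * ((3*k/p : ℕ) : ℚ_[p]) / ((3*k % p : ℕ) : ℚ_[p])‖ ≤ (p:ℝ)⁻¹ := by
    intro k hk
    rw [norm_div, norm_mul, hrnorm k hk, div_one, Padic.norm_p]
    calc (p:ℝ)⁻¹ * ‖((3*k/p : ℕ) : ℚ_[p])‖ ≤ (p:ℝ)⁻¹ * 1 := by
          refine mul_le_mul_of_nonneg_left ?_ pinv_pos.le
          have := Padic.norm_int_le_one (p := p) ((3*k/p : ℕ) : ℤ)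
          push_cast at this ⊢
          exact this
      _ = (p:ℝ)⁻¹ := mul_one _
  have happ := prod_one_add hx
  rw [← pow3_prod hp5] at happ
  have hsum : ∑ k ∈ Icc 1 (p-1), (p:ℚ_[p]) * ((3*k/p : ℕ) : ℚ_[p]) / ((3*k % p : ℕ) : ℚ_[p])
      = (p:ℚ_[p]) * ∑ k ∈ Icc 1 (p-1), ((3*k/p : ℕ) : ℚ_[p]) / ((3*k % p : ℕ) : ℚ_[p]) := by
    rw [Finset.mul_sum]
    exact Finset.sum_congr rfl fun k _ => by ring
  have key1 : Cong (q3 p)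
      (∑ k ∈ Icc 1 (p-1), ((3*k/p : ℕ) : ℚ_[p]) / ((3*k % p : ℕ) : ℚ_[p])) := by
    rw [Cong]
    have e : q3 p - ∑ k ∈ Icc 1 (p-1), ((3*k/p : ℕ) : ℚ_[p]) / ((3*k % p : ℕ) : ℚ_[p])
        = ((3:ℚ_[p])^(p-1) - (1 + ∑ k ∈ Icc 1 (p-1),
            (p:ℚ_[p]) * ((3*k/p : ℕ) : ℚ_[p]) / ((3*k % p : ℕ) : ℚ_[p]))) / (p:ℚ_[p]) := by
      rw [hsum, q3]
      field_simp
      ring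
    rw [e, norm_div, Padic.norm_p (p := p), div_eq_mul_inv, inv_inv]
    calc ‖_‖ * (p:ℝ) ≤ ((p:ℝ)⁻¹ * (p:ℝ)⁻¹) * p := mul_le_mul_of_nonneg_right happ hppos.le
      _ = (p:ℝ)⁻¹ := by field_simp
  -- step 2 : replace r_k by 3k
  have key2 : Cong (∑ k ∈ Icc 1 (p-1), ((3*k/p : ℕ) : ℚ_[p]) / ((3*k % p : ℕ) : ℚ_[p]))
      (∑ k ∈ Icc 1 (p-1), ((3*k/p : ℕ) : ℚ_[p]) * ((3 * (k:ℚ_[p])))⁻¹) := by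
    refine cong_sum fun k hk => ?_
    simp only [mem_Icc] at hk
    rw [div_eq_mul_inv]
    refine Cong.mul (cong_refl _) ?_ ?_ ?_
    · refine Cong.inv (hrnorm k (by simp only [mem_Icc]; exact hk)) ?_ ?_
      · rw [norm_mul, norm_three_unit hp5, norm_nat_unit hp5 hk.1 hk.2]; norm_num
      · rw [Cong]
        have e : ((3*k % p : ℕ) : ℚ_[p]) - 3 * (k:ℚ_[p]) = -((p:ℚ_[p]) * ((3*k/p : ℕ) : ℚ_[p])) := by
          have hmd := congrArg (fun m : ℕ => (m : ℚ_[p])) (Nat.mod_add_div (3*k) p)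
          push_cast at hmd
          linear_combination hmd
        rw [e, norm_neg, norm_mul, Padic.norm_p]
        calc (p:ℝ)⁻¹ * ‖((3*k/p : ℕ) : ℚ_[p])‖ ≤ (p:ℝ)⁻¹ * 1 := by
              refine mul_le_mul_of_nonneg_left ?_ pinv_pos.le
              have := Padic.norm_int_le_one (p := p) ((3*k/p : ℕ) : ℤ)
              push_cast at this ⊢
              exact this
          _ = (p:ℝ)⁻¹ := mul_one _
    · have := Padic.norm_int_le_one (p := p) ((3*k/p : ℕ) : ℤ)
      push_cast at this ⊢
      exact this
    · rw [norm_inv, norm_mul, norm_three_unit hp5, norm_nat_unit hp5 hk.1 hk.2]; norm_num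
  have key3 : (∑ k ∈ Icc 1 (p-1), ((3*k/p : ℕ) : ℚ_[p]) * ((3 * (k:ℚ_[p])))⁻¹)
      = (3:ℚ_[p])⁻¹ * ∑ k ∈ Icc 1 (p-1), ((3*k/p : ℕ) : ℚ_[p]) * ((k:ℚ_[p]))⁻¹ := by
    rw [Finset.mul_sum]
    refine Finset.sum_congr rfl fun k _ => ?_
    rw [mul_inv]
    ring
  rw [← key3]
  exact key1.trans key2

include hp5 in
lemma pmod3 : p % 3 ≠ 0 := by
  intro h
  have h3 : (3:ℕ) ∣ p := Nat.dvd_of_mod_eq_zero h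
  rcases (Nat.Prime.eq_one_or_self_of_dvd hp.out 3 h3) with h | h <;> omega

lemma e3_val (h3p : p % 3 ≠ 0) {k : ℕ} (h1 : 1 ≤ k) (h2 : k ≤ p-1) (hp5 : 5 ≤ p) :
    3*k/p = (if p/3 < k then 1 else 0) + (if 2*p/3 < k then 1 else 0) := by
  rcases lt_or_ge (3*k) p with hc | hc
  · rw [Nat.div_eq_of_lt hc]
    have h1' : ¬ (p/3 < k) := by omega
    have h2' : ¬ (2*p/3 < k) := by omega
    simp [h1', h2']
  · rcases lt_or_ge (3*k) (2*p) with hc2 | hc2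
    · rw [Nat.div_eq_of_lt_le (by omega : 1*p ≤ 3*k) (by omega : 3*k < (1+1)*p)]
      have h1' : p/3 < k := by omega
      have h2' : ¬ (2*p/3 < k) := by omega
      simp [h1', h2']
    · rw [Nat.div_eq_of_lt_le (by omega : 2*p ≤ 3*k) (by omega : 3*k < (2+1)*p)]
      have h1' : p/3 < k := by omega
      have h2' : 2*p/3 < k := by omega
      simp [h1', h2']

include hp5 in
lemma sum_e3 : ∑ k ∈ Icc 1 (p-1), ((3*k/p : ℕ) : ℚ_[p]) * ((k:ℚ_[p]))⁻¹
    = (∑ k ∈ Icc (p/3+1) (p-1), ((k:ℚ_[p]))⁻¹)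
      + (∑ k ∈ Icc (2*p/3+1) (p-1), ((k:ℚ_[p]))⁻¹) := by
  rw [← sum_Icc_ite (fun k => ((k:ℚ_[p]))⁻¹) (p/3) (p-1),
      ← sum_Icc_ite (fun k => ((k:ℚ_[p]))⁻¹) (2*p/3) (p-1), ← Finset.sum_add_distrib]
  refine Finset.sum_congr rfl fun k hk => ?_
  simp only [mem_Icc] at hk
  rw [e3_val (pmod3 hp5) hk.1 hk.2 hp5]
  split_ifs <;> push_cast <;> ring

include hp5 in
lemma tail_cong {t : ℕ} (ht : t ≤ p-1) :
    Cong (∑ k ∈ Icc (t+1) (p-1), ((k:ℚ_[p]))⁻¹) (- Hp p (p-1-t)) := by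
  have hre : ∑ k ∈ Icc (t+1) (p-1), ((k:ℚ_[p]))⁻¹
      = ∑ j ∈ Icc 1 (p-1-t), (((p-j : ℕ) : ℚ_[p]))⁻¹ := by
    refine Finset.sum_nbij' (fun k => p - k) (fun j => p - j) ?_ ?_ ?_ ?_ ?_
    · intro k hk; simp only [mem_Icc] at hk ⊢; omega
    · intro j hj; simp only [mem_Icc] at hj ⊢; omega
    · intro k hk; simp only [mem_Icc] at hk; omega
    · intro j hj; simp only [mem_Icc] at hj; omega
    · intro k hk
      simp only [mem_Icc] at hk
      congr 2
      omega
  rw [hre]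
  have hneg : - Hp p (p-1-t) = ∑ k ∈ Icc 1 (p-1-t), (-((k:ℚ_[p]))⁻¹) := by
    rw [Hp, ← Finset.sum_neg_distrib]
  rw [hneg]
  refine cong_sum fun j hj => ?_
  simp only [mem_Icc] at hj
  have hj2 : j ≤ p := by omega
  have hu : ‖((p-j : ℕ) : ℚ_[p])‖ = 1 := norm_nat_unit hp5 (by omega) (by omega)
  have hv : ‖(-(j:ℚ_[p]))‖ = 1 := by
    rw [norm_neg]; exact norm_nat_unit hp5 hj.1 (by omega)
  have hcong : Cong ((p-j : ℕ) : ℚ_[p]) (-(j:ℚ_[p])) := by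
    rw [Cong]
    have e : ((p-j : ℕ) : ℚ_[p]) - (-(j:ℚ_[p])) = (p:ℚ_[p]) := by
      rw [Nat.cast_sub hj2]; ring
    rw [e, Padic.norm_p]
  have := Cong.inv hu hv hcong
  rwa [inv_neg] at this

include hp5 in
lemma Hp_p1_cong : Cong (Hp p (p-1)) 0 := by
  have h := tail_cong hp5 (t := 0) (by omega)
  simp only [Nat.sub_zero, zero_add] at h
  have h' : Cong (Hp p (p-1)) (- Hp p (p-1)) := by
    rw [Hp]; exact h
  have h2 : ‖(2:ℚ_[p])‖ = 1 := by
    have : ¬ (p:ℤ) ∣ 2 := by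
      intro hd
      have := Int.le_of_dvd (by norm_num) hd
      have : p ≤ 2 := by exact_mod_cast this
      omega
    have := norm_int_unit this
    simpa using this
  have e : Hp p (p-1) - - Hp p (p-1) = 2 * Hp p (p-1) := by ring
  rw [Cong, e, norm_mul, h2, one_mul] at h'
  rw [Cong, sub_zero]
  exact h' 

include hp5 in
lemma Hp_flip {t : ℕ} (ht : t ≤ p-1) : Cong (Hp p t) (Hp p (p-1-t)) := by
  have hsplit := sum_Icc_split (fun k => ((k:ℚ_[p]))⁻¹) t (p-1) ht
  have e : Hp p t = Hp p (p-1) - ∑ k ∈ Icc (t+1) (p-1), ((k:ℚ_[p]))⁻¹ := by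
    rw [Hp, Hp, ← hsplit]; ring
  rw [e]
  have := (Hp_p1_cong hp5).sub (tail_cong hp5 ht)
  rwa [zero_sub, neg_neg] at this

include hp5 in
lemma lehmer : Cong (q3 p) ((3:ℚ_[p])⁻¹ * (-2 * Hp p (p/3))) := by
  have h3p := pmod3 hp5
  have hq := q3_cong hp5
  rw [sum_e3 hp5] at hq
  have e1 : p - 1 - p/3 = 2*p/3 := by omega
  have e2 : p - 1 - 2*p/3 = p/3 := by omega
  have hT1 : Cong (∑ k ∈ Icc (p/3+1) (p-1), ((k:ℚ_[p]))⁻¹) (- Hp p (p/3)) := by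
    have h := tail_cong hp5 (t := p/3) (by omega)
    rw [e1] at h
    refine h.trans ?_
    have hflip := (Hp_flip hp5 (t := 2*p/3) (by omega)).neg
    rw [e2] at hflip
    exact hflip
  have hT2 : Cong (∑ k ∈ Icc (2*p/3+1) (p-1), ((k:ℚ_[p]))⁻¹) (- Hp p (p/3)) := by
    have h := tail_cong hp5 (t := 2*p/3) (by omega)
    rwa [e2] at h
  have hsum := hT1.add hT2
  have hHn : ‖Hp p (p/3)‖ ≤ 1 := norm_Hp_le_one hp5 (by omega)
  have h3inv : ‖(3:ℚ_[p])⁻¹‖ ≤ 1 := by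
    rw [norm_inv, norm_three_unit hp5]; norm_num
  have hmul := Cong.mul (cong_refl ((3:ℚ_[p])⁻¹)) hsum h3inv ?_
  · refine hq.trans (hmul.trans ?_)
    have e : (3:ℚ_[p])⁻¹ * (- Hp p (p/3) + - Hp p (p/3)) = (3:ℚ_[p])⁻¹ * (-2 * Hp p (p/3)) := by
      ring
    rw [e]
    exact cong_refl _
  · have heq : ‖- Hp p (p/3) + - Hp p (p/3)‖ = ‖(2:ℚ_[p]) * Hp p (p/3)‖ := by
      rw [show - Hp p (p/3) + - Hp p (p/3) = -((2:ℚ_[p]) * Hp p (p/3)) by ring, norm_neg]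
    rw [heq, norm_mul]
    have h2 : ‖(2:ℚ_[p])‖ ≤ 1 := by
      have := Padic.norm_int_le_one (p:=p) 2
      simpa using this
    calc ‖(2:ℚ_[p])‖ * ‖Hp p (p/3)‖ ≤ 1 * 1 :=
          mul_le_mul h2 hHn (norm_nonneg _) zero_le_one
      _ = 1 := by norm_num

end q3sec
section final
variable {p : ℕ} [hp : Fact p.Prime]

lemma cong_const_mul (c : ℚ_[p]) {x y : ℚ_[p]} (h : Cong x y) (hc : ‖c‖ ≤ 1)
    (hy : ‖y‖ ≤ 1) : Cong (c*x) (c*y) :=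
  Cong.mul (cong_refl c) h hc hy

lemma cong_sq {x y : ℚ_[p]} (h : Cong x y) (hx : ‖x‖ ≤ 1) (hy : ‖y‖ ≤ 1) :
    Cong (x^2) (y^2) := by
  have := Cong.mul h h hx hy
  rwa [← pow_two, ← pow_two] at this

lemma norm_two_unit (hp5 : 5 ≤ p) : ‖(2:ℚ_[p])‖ = 1 := by
  have h2 : ¬ (p:ℤ) ∣ 2 := by
    intro hd
    have := Int.le_of_dvd (by norm_num) hd
    have : p ≤ 2 := by exact_mod_cast this
    omega
  have := norm_int_unit h2
  simpa using this

end final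

end
end Stmt16

open Stmt16 in
theorem stmt_16 (p : ℕ) [Fact p.Prime] (hp5 : 5 ≤ p) :
    ‖(((∑ r ∈ Finset.Icc 1 (p - 1),
          (((3 * r).factorial : ℚ) / ((r.factorial : ℚ)) ^ 3 * (1 / 27) ^ r * (1 / (r : ℚ) ^ 2))
        - (-(9 / 2) * (((1 / 3 : ℚ) ^ (p - 1) - 1) / p) ^ 2)) : ℚ) : ℚ_[p])‖
      ≤ (p : ℝ) ^ (-1 : ℤ) := by
  classical
  have h3p := Stmt16.pmod3 (p := p) hp5
  have h3u : ‖(3:ℚ_[p])‖ = 1 := norm_three_unit hp5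
  have h2u : ‖(2:ℚ_[p])‖ = 1 := norm_two_unit hp5
  -- recast the goal in ℚ_[p]
  have hcast : (((∑ r ∈ Finset.Icc 1 (p - 1),
          (((3 * r).factorial : ℚ) / ((r.factorial : ℚ)) ^ 3 * (1 / 27) ^ r * (1 / (r : ℚ) ^ 2))
        - (-(9 / 2) * (((1 / 3 : ℚ) ^ (p - 1) - 1) / p) ^ 2)) : ℚ) : ℚ_[p])
      = (∑ r ∈ Finset.Icc 1 (p - 1),
          (((3 * r).factorial : ℚ_[p]) / ((r.factorial : ℚ_[p])) ^ 3 * (1 / 27) ^ r * (1 / (r : ℚ_[p]) ^ 2)))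
        - (-(9 / 2) * (((1 / 3 : ℚ_[p]) ^ (p - 1) - 1) / (p:ℚ_[p])) ^ 2) := by
    push_cast
    ring
  rw [hcast, show ((p:ℝ)) ^ (-1 : ℤ) = ((p:ℝ))⁻¹ by
    rw [zpow_neg, zpow_one]]
  set S : ℚ_[p] := ∑ r ∈ Finset.Icc 1 (p - 1),
      (((3 * r).factorial : ℚ_[p]) / ((r.factorial : ℚ_[p])) ^ 3 * (1 / 27) ^ r * (1 / (r : ℚ_[p]) ^ 2)) with hSdef
  set qq : ℚ_[p] := ((1 / 3 : ℚ_[p]) ^ (p - 1) - 1) / (p:ℚ_[p]) with hqqdef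
  show ‖S - (-(9/2) * qq^2)‖ ≤ (p:ℝ)⁻¹
  -- ### construct a ≡ -1/3
  have h3ne : (3 : ZMod p) ≠ 0 := three_zmod_ne hp5
  set aZ : ZMod p := - (3 : ZMod p)⁻¹ with haZ
  set a : ℕ := aZ.val with ha
  have haval : ((a : ℕ) : ZMod p) = aZ := ZMod.natCast_rightInverse aZ
  have ha3 : p ∣ 3*a+1 := by
    have h0 : ((3*a+1 : ℕ) : ZMod p) = 0 := by
      push_cast
      rw [haval, haZ, mul_neg, mul_inv_cancel₀ h3ne]
      ring
    exact (ZMod.natCast_eq_zero_iff _ _).mp h0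
  have ha2 : a ≤ p - 1 := by
    have := ZMod.val_lt aZ
    omega
  have ha1 : 1 ≤ a := by
    rcases Nat.eq_zero_or_pos a with h0 | h0
    · exfalso
      have hz : aZ = 0 := by rwa [← ZMod.val_eq_zero, ← ha]
      rw [haZ, neg_eq_zero] at hz
      exact (inv_ne_zero h3ne) hz
    · omega
  clear_value a aZ
  -- ### step 1 : S ≡ Σ (-1)^k C(a,k)C(a+k,k) / k²
  have hstep1 : Cong S (∑ k ∈ Finset.Icc 1 (p-1),
      ((-1:ℚ_[p])^k * (a.choose k : ℚ_[p]) * ((a+k).choose k : ℚ_[p])) * (((k:ℚ_[p])^2)⁻¹)) := by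
    refine cong_sum fun k hk => ?_
    simp only [Finset.mem_Icc] at hk
    have e : ((3*k).factorial : ℚ_[p]) / ((k.factorial : ℚ_[p]))^3 * (1/27)^k * (1/(k:ℚ_[p])^2)
        = (((3*k).factorial : ℚ_[p]) / ((k.factorial : ℚ_[p]))^3 / 27^k) * (((k:ℚ_[p])^2)⁻¹) := by
      rw [div_pow, one_pow]
      ring
    rw [e]
    refine Cong.mul (term_cong hp5 a ha3 hk.1 hk.2) (cong_refl _) (term_norm_c hp5 hk.2) ?_
    rw [norm_inv, norm_pow, norm_nat_unit hp5 hk.1 hk.2]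
    norm_num
  -- ### step 2 : that sum is exactly -2 (Hp a)²
  have hstep2 : (∑ k ∈ Finset.Icc 1 (p-1),
      ((-1:ℚ_[p])^k * (a.choose k : ℚ_[p]) * ((a+k).choose k : ℚ_[p])) * (((k:ℚ_[p])^2)⁻¹))
      = -2 * (Hp p a)^2 := by
    have hsub : Finset.Icc 1 a ⊆ Finset.Icc 1 (p-1) := Finset.Icc_subset_Icc_right ha2
    have hvanish : ∀ k ∈ Finset.Icc 1 (p-1), k ∉ Finset.Icc 1 a →
        ((-1:ℚ_[p])^k * (a.choose k : ℚ_[p]) * ((a+k).choose k : ℚ_[p])) * (((k:ℚ_[p])^2)⁻¹) = 0 := by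
      intro k hk hk2
      simp only [Finset.mem_Icc] at hk hk2
      have : a < k := by omega
      rw [Nat.choose_eq_zero_of_lt this]
      simp
    rw [← Finset.sum_subset hsub hvanish]
    have hcast2 : ∀ k : ℕ, ((fb a k : ℚ) : ℚ_[p])
        = ((-1:ℚ_[p])^k * (a.choose k : ℚ_[p]) * ((a+k).choose k : ℚ_[p])) * (((k:ℚ_[p])^2)⁻¹) := by
      intro k
      rw [fb, bin, bin]
      push_cast
      ring
    have e1 : ∑ k ∈ Finset.Icc 1 a,
        ((-1:ℚ_[p])^k * (a.choose k : ℚ_[p]) * ((a+k).choose k : ℚ_[p])) * (((k:ℚ_[p])^2)⁻¹)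
        = ((∑ i ∈ Finset.range a, fb a (i+1) : ℚ) : ℚ_[p]) := by
      rw [sum_Icc_one_eq_range (fun k =>
        ((-1:ℚ_[p])^k * (a.choose k : ℚ_[p]) * ((a+k).choose k : ℚ_[p])) * (((k:ℚ_[p])^2)⁻¹)) a]
      rw [Rat.cast_sum]
      exact Finset.sum_congr rfl fun i _ => (hcast2 (i+1)).symm
    have hHcast : ((H a : ℚ) : ℚ_[p]) = Hp p a := by
      rw [H, Hp, sum_Icc_one_eq_range (fun k => ((k:ℚ_[p]))⁻¹) a, Rat.cast_sum]
      refine Finset.sum_congr rfl fun i _ => ?_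
      push_cast
      ring
    rw [e1, sumB a]
    push_cast
    rw [hHcast]
  -- ### step 3 : Hp a ≡ Hp (p/3)
  have hHpa_n : ‖Hp p a‖ ≤ 1 := norm_Hp_le_one hp5 ha2
  have hHp3_n : ‖Hp p (p/3)‖ ≤ 1 := norm_Hp_le_one hp5 (by omega)
  have hHa : Cong (Hp p a) (Hp p (p/3)) := by
    obtain ⟨c, hc⟩ := ha3
    have hc2 : c ≤ 2 := by
      by_contra hcon
      have h3c : 3*p ≤ p*c := by
        calc 3*p = p*3 := by ring
          _ ≤ p*c := Nat.mul_le_mul_left p (by omega)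
      omega
    have hc0 : c ≠ 0 := by
      rintro rfl
      omega
    have hcases : a = p/3 ∨ a = 2*p/3 := by
      have hc1 : c = 1 ∨ c = 2 := by omega
      rcases hc1 with rfl | rfl
      · left; omega
      · right; omega
    rcases hcases with h | h
    · rw [h]; exact cong_refl _
    · rw [h]
      have hfl := Hp_flip hp5 (t := 2*p/3) (by omega)
      rwa [show p-1-2*p/3 = p/3 by omega] at hfl
  -- ### step 4 : Lehmer,  Hp (p/3) ≡ -(3/2) q3
  have hq3n : ‖q3 p‖ ≤ 1 := norm_q3_le_one hp5
  have hleh := lehmer hp5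
  have hc32 : ‖(-(3/2) : ℚ_[p])‖ ≤ 1 := by
    rw [norm_neg, norm_div, h3u, h2u]
    norm_num
  have hrhs_n : ‖(3:ℚ_[p])⁻¹ * (-2 * Hp p (p/3))‖ ≤ 1 := by
    rw [norm_mul, norm_inv, h3u, inv_one, one_mul, norm_mul, norm_neg, h2u, one_mul]
    exact hHp3_n
  have hmul := cong_const_mul (-(3/2) : ℚ_[p]) hleh hc32 hrhs_n
  have hsimpl : (-(3/2) : ℚ_[p]) * ((3:ℚ_[p])⁻¹ * (-2 * Hp p (p/3))) = Hp p (p/3) := by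
    have h3ne' : (3:ℚ_[p]) ≠ 0 := by
      intro h0; rw [h0, norm_zero] at h3u; norm_num at h3u
    field_simp
  rw [hsimpl] at hmul
  have hq32 : Cong (Hp p (p/3)) (-(3/2) * q3 p) := hmul.symm
  have hq32_n : ‖(-(3/2)) * q3 p‖ ≤ 1 := by
    rw [norm_mul]
    calc ‖(-(3/2) : ℚ_[p])‖ * ‖q3 p‖ ≤ 1 * 1 := mul_le_mul hc32 hq3n (norm_nonneg _) zero_le_one
      _ = 1 := by norm_num
  -- ### step 5 : qq ≡ -q3
  have hXn : ‖(3:ℚ_[p])^(p-1)‖ = 1 := by rw [norm_pow, h3u, one_pow]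
  have hXne : (3:ℚ_[p])^(p-1) ≠ 0 := by
    intro h0; rw [h0, norm_zero] at hXn; norm_num at hXn
  have hpne : (p:ℚ_[p]) ≠ 0 := Nat.cast_ne_zero.mpr (by omega)
  have hq3X : (3:ℚ_[p])^(p-1) - 1 = (p:ℚ_[p]) * q3 p := by
    rw [q3]
    field_simp
  have hqqe : qq = -(q3 p) * ((3:ℚ_[p])^(p-1))⁻¹ := by
    rw [hqqdef, q3, one_div, inv_pow]
    field_simp
    ring
  have hqqn : ‖qq‖ ≤ 1 := by
    rw [hqqe, norm_mul, norm_neg, norm_inv, hXn, inv_one, mul_one]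
    exact hq3n
  have hqq3 : Cong qq (-(q3 p)) := by
    rw [Cong, hqqe]
    have e : -(q3 p) * ((3:ℚ_[p])^(p-1))⁻¹ - (-(q3 p))
        = q3 p * (((3:ℚ_[p])^(p-1)) - 1) * ((3:ℚ_[p])^(p-1))⁻¹ := by
      field_simp
      ring
    rw [e, hq3X, norm_mul, norm_inv, hXn, inv_one, mul_one, norm_mul, norm_mul, Padic.norm_p]
    calc ‖q3 p‖ * ((p:ℝ)⁻¹ * ‖q3 p‖) ≤ 1 * ((p:ℝ)⁻¹ * 1) := by
          refine mul_le_mul hq3n ?_ (by positivity) zero_le_one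
          exact mul_le_mul_of_nonneg_left hq3n pinv_pos.le
      _ = (p:ℝ)⁻¹ := by ring
  -- ### final chain
  have hnq3 : ‖-(q3 p)‖ ≤ 1 := by rwa [norm_neg]
  have hqq2 : Cong (qq^2) ((q3 p)^2) := by
    have := cong_sq hqq3 hqqn hnq3
    rwa [neg_pow, show (-1:ℚ_[p])^2 * (q3 p)^2 = (q3 p)^2 by ring] at this
  have hHsq : Cong ((Hp p a)^2) ((-(3/2)) * q3 p * ((-(3/2)) * q3 p)) := by
    have h1 := cong_sq hHa hHpa_n hHp3_n
    have h2 := Cong.mul hq32 hq32 hHp3_n hq32_n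
    rw [← pow_two] at h2
    exact h1.trans h2
  -- S ≡ -2 (Hp a)^2 ≡ -2 * (9/4) q3² = -(9/2) q3² ≡ -(9/2) qq²
  have hS1 : Cong S (-2 * (Hp p a)^2) := by
    rw [← hstep2]
    exact hstep1
  have hS2 : Cong (-2 * (Hp p a)^2) (-2 * ((-(3/2)) * q3 p * ((-(3/2)) * q3 p))) := by
    refine cong_const_mul _ hHsq ?_ ?_
    · rw [norm_neg, h2u]
    · rw [norm_mul]
      calc ‖(-(3/2)) * q3 p‖ * ‖(-(3/2)) * q3 p‖ ≤ 1 * 1 :=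
            mul_le_mul hq32_n hq32_n (norm_nonneg _) zero_le_one
        _ = 1 := by norm_num
  have hT : Cong (-(9/2) * qq^2) (-(9/2) * (q3 p)^2) := by
    refine cong_const_mul _ hqq2 ?_ ?_
    · rw [norm_neg, norm_div]
      rw [show (9:ℚ_[p]) = 3*3 by norm_num, norm_mul, h3u, h2u]
      norm_num
    · rw [norm_pow]
      calc ‖q3 p‖^2 ≤ 1^2 := pow_le_pow_left₀ (norm_nonneg _) hq3n 2
        _ = 1 := by norm_num
  have heq : -2 * ((-(3/2)) * q3 p * ((-(3/2)) * q3 p)) = -(9/2) * (q3 p)^2 := by ring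
  have hfinal : Cong S (-(9/2) * qq^2) := by
    refine (hS1.trans (hS2.trans ?_)).trans hT.symm
    rw [heq]
    exact cong_refl _
  exact hfinal
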